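/- Let (X_p)_p, indexed by the primes, be independent random variables on a probability space (Ω, P), each distributed according to the probability Haar measure on SU₂(ℂ). For ν ≥ 0 let U_ν be the polynomial determined by U_ν(2cos θ) = sin((ν+1)θ)/sin θ, and for n ≥ 1 set Y_n = ∏_{p^ν ∥ n} U_ν(Tr X_p). For positive integers n, m let d = gcd(n,m), n' = n/d, m' = m/d. Then E(Y_n Y_m) = 0 unless both n' and m' are perfect squares. -/

import Mathlib

open MeasureTheory ProbabilityTheory Filter

noncomputable section

/-- `SU₂(ℂ)`: the group of 2×2 complex unitary matrices of determinant 1. -/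
abbrev SU2 := Matrix.specialUnitaryGroup (Fin 2) ℂ

noncomputable instance : MeasurableSpace SU2 := borel SU2

instance : BorelSpace SU2 := ⟨rfl⟩

instance : Group SU2 :=
  { (inferInstance : Monoid SU2) with
    inv := fun A => ⟨star (A : Matrix (Fin 2) (Fin 2) ℂ), by
      obtain ⟨h1, h2⟩ := Matrix.mem_specialUnitaryGroup_iff.mp A.2
      refine Matrix.mem_specialUnitaryGroup_iff.mpr ⟨Unitary.star_mem h1, ?_⟩
      show Matrix.det (star (A : Matrix (Fin 2) (Fin 2) ℂ)) = 1
      rw [Matrix.star_eq_conjTranspose, Matrix.det_conjTranspose, h2, star_one]⟩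
    inv_mul_cancel := fun A => Subtype.ext (Unitary.star_mul_self_of_mem A.2.1) }

/-- The (real) trace of an element of `SU₂(ℂ)`; the trace of a unitary matrix with
determinant 1 is real, and we take its real part. -/
def rtr (x : SU2) : ℝ := (Matrix.trace (x : Matrix (Fin 2) (Fin 2) ℂ)).re

/-- The polynomial `U_ν` determined by `U_ν(2 cos θ) = sin((ν+1)θ)/sin θ`
(a rescaled Chebyshev polynomial of the second kind). -/
def chebU (ν : ℕ) (x : ℝ) : ℝ := (Polynomial.Chebyshev.U ℝ (ν : ℤ)).eval (x / 2)

lemma U_eval_neg (ν : ℕ) (t : ℝ) :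
    (Polynomial.Chebyshev.U ℝ (ν : ℤ)).eval (-t)
      = (-1) ^ ν * (Polynomial.Chebyshev.U ℝ (ν : ℤ)).eval t := by
  induction ν using Nat.twoStepInduction generalizing t with
  | zero => simp [Polynomial.Chebyshev.U_zero]
  | one => simp [Polynomial.Chebyshev.U_one]
  | more ν ih1 ih2 =>
      have hc : ((ν + 2 : ℕ) : ℤ) = (ν : ℤ) + 2 := by push_cast; ring
      have hc1 : ((ν + 1 : ℕ) : ℤ) = (ν : ℤ) + 1 := by push_cast; ring
      rw [hc, Polynomial.Chebyshev.U_add_two]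
      rw [hc1] at ih2
      simp only [Polynomial.eval_sub, Polynomial.eval_mul, Polynomial.eval_X,
        Polynomial.eval_ofNat]
      rw [ih1 t, ih2 t, pow_succ, pow_succ]
      ring

lemma chebU_zero (t : ℝ) : chebU 0 t = 1 := by
  simp [chebU, Polynomial.Chebyshev.U_zero]

lemma chebU_neg (ν : ℕ) (t : ℝ) : chebU ν (-t) = (-1) ^ ν * chebU ν t := by
  unfold chebU
  rw [neg_div, U_eval_neg]

lemma chebU_cont (ν : ℕ) : Continuous (chebU ν) :=
  (Polynomial.continuous _).comp (continuous_id.div_const 2)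

lemma rtr_cont : Continuous rtr :=
  Complex.continuous_re.comp (Continuous.matrix_trace continuous_subtype_val)

lemma isSquare_of_even_factorization {n : ℕ} (hn : n ≠ 0)
    (h : ∀ p, Even (n.factorization p)) : IsSquare n := by
  refine ⟨n.factorization.prod fun p e => p ^ (e / 2), ?_⟩
  rw [← Finsupp.prod_mul]
  rw [show n.factorization.prod (fun p e => p ^ (e / 2) * p ^ (e / 2))
      = n.factorization.prod fun p e => p ^ e from
    Finsupp.prod_congr fun p hp => by
      obtain ⟨c, hc⟩ := h p
      rw [← pow_add]
      congr 1
      omega]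
  exact (Nat.factorization_prod_pow_eq_self hn).symm

lemma aux_odd {n m : ℕ} (hn : 0 < n) (hm : 0 < m)
    (h : ¬ IsSquare (n / n.gcd m)) :
    ∃ p : ℕ, p.Prime ∧ Odd (n.factorization p + m.factorization p) := by
  have hdvd : n.gcd m ∣ n := Nat.gcd_dvd_left n m
  have hnd : n / n.gcd m ≠ 0 :=
    Nat.div_ne_zero_iff.mpr ⟨Nat.gcd_ne_zero_left hn.ne', Nat.le_of_dvd hn hdvd⟩
  have hpe : ¬ ∀ p, Even ((n / n.gcd m).factorization p) :=
    fun hall => h (isSquare_of_even_factorization hnd hall)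
  push_neg at hpe
  obtain ⟨p, hp⟩ := hpe
  have hfac : (n / n.gcd m).factorization p
      = n.factorization p - min (n.factorization p) (m.factorization p) := by
    rw [Nat.factorization_div hdvd, Nat.factorization_gcd hn.ne' hm.ne',
      Finsupp.tsub_apply, Finsupp.inf_apply]
  rw [hfac, Nat.even_iff] at hp
  have hprime : p.Prime := by
    have hne : n.factorization p ≠ 0 := by omega
    have : p ∈ n.primeFactors := by
      rw [← Nat.support_factorization]
      exact Finsupp.mem_support_iff.mpr hne
    exact Nat.prime_of_mem_primeFactors this
  exact ⟨p, hprime, Nat.odd_iff.mpr (by omega)⟩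

def negI : SU2 := ⟨-1, by
  refine Matrix.mem_specialUnitaryGroup_iff.mpr ⟨?_, ?_⟩
  · rw [Unitary.mem_iff]; constructor <;> simp
  · show Matrix.det (-1 : Matrix (Fin 2) (Fin 2) ℂ) = 1
    rw [show (-1 : Matrix (Fin 2) (Fin 2) ℂ) = -(1) from rfl, Matrix.det_neg]
    simp⟩

lemma negI_mul_coe (x : SU2) :
    ((negI * x : SU2) : Matrix (Fin 2) (Fin 2) ℂ) = -(x : Matrix (Fin 2) (Fin 2) ℂ) := by
  show ((negI : Matrix (Fin 2) (Fin 2) ℂ) * x) = _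
  rw [show ((negI : Matrix (Fin 2) (Fin 2) ℂ)) = -1 from rfl, neg_one_mul]

lemma rtr_negI_mul (x : SU2) : rtr (negI * x) = - rtr x := by
  unfold rtr; rw [negI_mul_coe, Matrix.trace_neg, Complex.neg_re]

lemma negI_mul_cont : Continuous fun x : SU2 => negI * x := by
  refine continuous_induced_rng.mpr ?_
  have h : (Subtype.val ∘ fun x : SU2 => negI * x)
      = fun x : SU2 => -(x : Matrix (Fin 2) (Fin 2) ℂ) := by
    funext x; exact negI_mul_coe x
  rw [h]
  exact continuous_subtype_val.neg


/-- `Yn x n = ∏_{p^ν ∥ n} U_ν(Tr x_p)`, the product being over the prime powers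
exactly dividing `n`. -/
def Yn (x : ℕ → SU2) (n : ℕ) : ℝ :=
  ∏ p ∈ n.primeFactors, chebU (n.factorization p) (rtr (x p))

/-- With `d = gcd(n,m)`, `n´ = n/d`, `m´ = m/d`, one has `E(Y_n Y_m) = 0` unless both
`n´` and `m´` are perfect squares. -/
theorem statement8
    {Ω : Type*} [MeasurableSpace Ω] (P : Measure Ω) [IsProbabilityMeasure P]
    (X : ℕ → Ω → SU2) (hXm : ∀ p, Measurable (X p))
    (hindep : iIndepFun (fun p : Nat.Primes => X p) P)
    (μ : Measure SU2) (hHaar : μ.IsHaarMeasure) (hμprob : IsProbabilityMeasure μ)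
    (hdist : ∀ p : ℕ, p.Prime → Measure.map (X p) P = μ)
    (n m : ℕ) (hn : 0 < n) (hm : 0 < m)
    (h : ¬(IsSquare (n / n.gcd m) ∧ IsSquare (m / n.gcd m))) :
    ∫ ω, Yn (fun p => X p ω) n * Yn (fun p => X p ω) m ∂P = 0 := by
  classical
  obtain ⟨p, hp, hodd⟩ : ∃ p : ℕ, p.Prime ∧ Odd (n.factorization p + m.factorization p) := by
    rcases not_and_or.mp h with h' | h'
    · exact aux_odd hn hm h'
    · obtain ⟨p, hp, ho⟩ := aux_odd hm hn (by rwa [Nat.gcd_comm])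
      exact ⟨p, hp, by rwa [Nat.add_comm]⟩
  set F : ℕ → SU2 → ℝ :=
    fun q y => chebU (n.factorization q) (rtr y) * chebU (m.factorization q) (rtr y) with hF
  have hFm : ∀ q, Measurable (F q) := fun q =>
    (((chebU_cont _).comp rtr_cont).mul ((chebU_cont _).comp rtr_cont)).measurable
  set S : Finset ℕ := n.primeFactors ∪ m.primeFactors with hS
  have hSprime : ∀ q ∈ S, q.Prime := by
    intro q hq
    rcases Finset.mem_union.mp hq with hq | hq <;> exact Nat.prime_of_mem_primeFactors hq
  have hpS : p ∈ S := by
    have hne : n.factorization p ≠ 0 ∨ m.factorization p ≠ 0 := by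
      rcases hodd with ⟨c, hc⟩; omega
    rcases hne with hne | hne
    · exact Finset.mem_union_left _ (by
        rw [← Nat.support_factorization]; exact Finsupp.mem_support_iff.mpr hne)
    · exact Finset.mem_union_right _ (by
        rw [← Nat.support_factorization]; exact Finsupp.mem_support_iff.mpr hne)
  have hstep : ∀ x : ℕ → SU2, Yn x n * Yn x m = ∏ q ∈ S, F q (x q) := by
    intro x
    have h1 : Yn x n = ∏ q ∈ S, chebU (n.factorization q) (rtr (x q)) :=
      Finset.prod_subset Finset.subset_union_left (by
        intro q _ hq
        have hz : n.factorization q = 0 := by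
          rwa [← Finsupp.notMem_support_iff, Nat.support_factorization]
        rw [hz, chebU_zero])
    have h2 : Yn x m = ∏ q ∈ S, chebU (m.factorization q) (rtr (x q)) :=
      Finset.prod_subset Finset.subset_union_right (by
        intro q _ hq
        have hz : m.factorization q = 0 := by
          rwa [← Finsupp.notMem_support_iff, Nat.support_factorization]
        rw [hz, chebU_zero])
    rw [h1, h2, ← Finset.prod_mul_distrib]
  set G : Nat.Primes → Ω → ℝ := fun q ω => F q.1 (X q.1 ω) with hG
  have hGindep : iIndepFun G P :=
    hindep.comp (fun q => F q.1) (fun q => hFm q.1)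
  have hGm : ∀ q, Measurable (G q) := fun q => (hFm q.1).comp (hXm q.1)
  set pp : Nat.Primes := ⟨p, hp⟩ with hpp
  set T : Finset Nat.Primes := (S.erase p).subtype Nat.Prime with hT
  have hppT : pp ∉ T :=
    fun hmem => Finset.notMem_erase p S (Finset.mem_subtype.mp hmem)
  have hIndep : IndepFun (∏ j ∈ T, G j) (G pp) P :=
    hGindep.indepFun_finset_prod_of_notMem hGm hppT
  have hTm : Measurable (∏ j ∈ T, G j) := by
    rw [Finset.prod_fn]
    exact Finset.measurable_prod _ fun j _ => hGm j
  have hpt : ∀ ω, Yn (fun q => X q ω) n * Yn (fun q => X q ω) m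
      = (∏ j ∈ T, G j) ω * G pp ω := by
    intro ω
    rw [hstep, Finset.prod_apply, ← Finset.prod_erase_mul S _ hpS]
    congr 1
    refine (Finset.prod_nbij (fun a : Nat.Primes => (a : ℕ)) ?_ ?_ ?_ ?_).symm
    · intro a ha; exact Finset.mem_subtype.mp ha
    · exact fun a _ b _ hab => Subtype.ext hab
    · intro b hb
      have hb' : b ∈ S.erase p := Finset.mem_coe.mp hb
      exact ⟨⟨b, hSprime b (Finset.mem_of_mem_erase hb')⟩,
        Finset.mem_coe.mpr (Finset.mem_subtype.mpr hb'), rfl⟩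
    · intro a _; rfl
  -- the zero factor
  have hFneg : ∀ x : SU2, F p (negI * x) = - F p x := by
    intro x
    rw [hF]
    simp only
    rw [rtr_negI_mul, chebU_neg, chebU_neg, mul_mul_mul_comm, ← pow_add,
      Odd.neg_one_pow hodd, neg_one_mul]
  haveI := hHaar
  have hzero : ∫ ω, G pp ω ∂P = 0 := by
    have hmap : ∫ ω, G pp ω ∂P = ∫ x, F p x ∂μ := by
      rw [← hdist p hp,
        integral_map (hXm p).aemeasurable (hFm p).aestronglyMeasurable]
    rw [hmap]
    have h1 : ∫ x, F p x ∂μ = ∫ x, F p (negI * x) ∂μ := by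
      conv_lhs => rw [← map_mul_left_eq_self μ negI]
      rw [integral_map negI_mul_cont.measurable.aemeasurable
        (hFm p).aestronglyMeasurable]
    have h2 : ∫ x, F p (negI * x) ∂μ = - ∫ x, F p x ∂μ := by
      simp_rw [hFneg]
      exact integral_neg _
    linarith
  calc ∫ ω, Yn (fun q => X q ω) n * Yn (fun q => X q ω) m ∂P
      = ∫ ω, (∏ j ∈ T, G j) ω * G pp ω ∂P := integral_congr_ae (Filter.Eventually.of_forall hpt)
    _ = (∫ ω, (∏ j ∈ T, G j) ω ∂P) * ∫ ω, G pp ω ∂P :=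
        hIndep.integral_fun_mul_eq_mul_integral hTm.aestronglyMeasurable (hGm pp).aestronglyMeasurable
    _ = 0 := by rw [hzero, mul_zero]
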